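/- Let D be a Steiner triple system S(2,3,v) with block set B. Then a₀(D) + a₃(D) = Σ_{{B,C} ∈ C(B,2)} I(B,C) − v(v−1)(v−3)/12, where I(B,C) = |N⁻(B) ∩ N⁻(C)| in Welter's game Γ_{v,3} and a_i(D) is the number of 3-subsets P of [v] that are non-blocks with exactly i out-neighbors among the blocks. -/

import Mathlib

/-- The edge relation of Welter's game: there is an edge from `P` to `P^{(p q)}`
whenever `p ∈ P`, `q ∉ P`, `q < p`. -/
def welterEdge (P Q : Finset ℕ) : Prop :=
  ∃ p ∈ P, ∃ q, q ∉ P ∧ q < p ∧ Q = insert q (P.erase p)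

/-- The vertex set of Welter's game `Γ_{v,k}`: the `k`-element subsets of `{0, ..., v-1}`. -/
def welterVertex (v k : ℕ) : Set (Finset ℕ) :=
  {P | P ⊆ Finset.range v ∧ P.card = k}

/-- The edge relation of Welter's game `Γ_{v,k}`. -/
def welterRel (v k : ℕ) : Finset ℕ → Finset ℕ → Prop :=
  fun P Q => P ∈ welterVertex v k ∧ Q ∈ welterVertex v k ∧ welterEdge P Q

/-- A `t`-`(v, k, lam)` design with point set `{0, ..., v-1}` and block set `𝔅`:
every block is a `k`-subset of `{0, ..., v-1}` and every `t`-subset of `{0, ..., v-1}`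
is contained in exactly `lam` blocks. -/
def IsDesign (v t k lam : ℕ) (𝔅 : Finset (Finset ℕ)) : Prop :=
  (∀ b ∈ 𝔅, b ⊆ Finset.range v ∧ b.card = k) ∧
  ∀ T : Finset ℕ, T ⊆ Finset.range v → T.card = t →
    (𝔅.filter fun b => T ⊆ b).card = lam

/-- A Steiner system `S(t, k, v)` with point set `{0, ..., v-1}`. -/
def IsSteiner (v t k : ℕ) (𝔅 : Finset (Finset ℕ)) : Prop :=
  IsDesign v t k 1 𝔅

/-- `a_i(D)`: the number of `k`-subsets of `{0, ..., v-1}` that are not blocks and have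
exactly `i` out-neighbors among the blocks in Welter's game `Γ_{v,k}`. -/
noncomputable def aCount (v k : ℕ) (𝔅 : Finset (Finset ℕ)) (i : ℕ) : ℕ :=
  Set.ncard {P | P ∈ welterVertex v k ∧ P ∉ 𝔅 ∧
    Set.ncard {b | b ∈ 𝔅 ∧ welterRel v k P b} = i}

/-- `I(B, C) = |N⁻(B) ∩ N⁻(C)|` in Welter's game `Γ_{v,3}`. -/
noncomputable def ICount (v : ℕ) (B C : Finset ℕ) : ℕ :=
  Set.ncard {P | welterRel v 3 P B ∧ welterRel v 3 P C}


open Finset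
open scoped Classical

noncomputable def deg (v : ℕ) (𝔅 : Finset (Finset ℕ)) (P : Finset ℕ) : ℕ :=
  (𝔅.filter (fun b => welterRel v 3 P b)).card

lemma pairs_through (s : Finset ℕ) (q : ℕ) (hq : q ∈ s) :
    ((s.powersetCard 2).filter (fun T => q ∈ T)).card = s.card - 1 := by
  have himg : (s.powersetCard 2).filter (fun T => q ∈ T)
      = (s.erase q).image (fun x => insert q {x}) := by
    ext T
    simp only [mem_filter, Finset.mem_powersetCard, mem_image, mem_erase]
    constructor
    · rintro ⟨⟨hTs, hT2⟩, hqT⟩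
      have h1 : (T.erase q).card = 1 := by
        rw [Finset.card_erase_of_mem hqT, hT2]
      obtain ⟨x, hx⟩ := Finset.card_eq_one.mp h1
      have hxq : x ≠ q := by
        intro h; subst h
        have := Finset.notMem_erase x T; rw [hx] at this; simp at this
      refine ⟨x, ⟨hxq, hTs ?_⟩, ?_⟩
      · have : x ∈ T.erase q := by rw [hx]; simp
        exact Finset.mem_of_mem_erase this
      · have : insert q (T.erase q) = T := Finset.insert_erase hqT
        rw [hx] at this
        simpa using this
    · rintro ⟨x, ⟨hxq, hxs⟩, rfl⟩
      refine ⟨⟨?_, ?_⟩, by simp⟩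
      · intro y hy
        simp only [mem_insert, Finset.mem_singleton] at hy
        rcases hy with rfl | rfl
        · exact hq
        · exact hxs
      · rw [Finset.card_insert_of_notMem (by simp [Ne.symm hxq])]
        simp
  rw [himg, Finset.card_image_of_injOn, Finset.card_erase_of_mem hq]
  intro x hx y hy hxy
  have h2 : (insert q {x} : Finset ℕ) = insert q {y} := hxy
  have : x ∈ insert q ({y} : Finset ℕ) := by rw [← h2]; simp
  simp only [mem_insert, Finset.mem_singleton] at this
  rcases this with rfl | rfl
  · simp at hx
  · rfl

lemma six_blocks (v : ℕ) (𝔅 : Finset (Finset ℕ)) (hD : IsDesign v 2 3 1 𝔅) :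
    6 * 𝔅.card = v * (v - 1) := by
  have hswap : ∑ T ∈ (range v).powersetCard 2, (𝔅.filter (fun b => T ⊆ b)).card
      = ∑ b ∈ 𝔅, (((range v).powersetCard 2).filter (fun T => T ⊆ b)).card := by
    simp only [Finset.card_filter]
    rw [Finset.sum_comm]
  have hL : ∑ T ∈ (range v).powersetCard 2, (𝔅.filter (fun b => T ⊆ b)).card
      = v.choose 2 := by
    rw [Finset.sum_congr rfl (fun T hT => hD.2 T (Finset.mem_powersetCard.mp hT).1
        (Finset.mem_powersetCard.mp hT).2),
      Finset.sum_const, smul_eq_mul, mul_one, Finset.card_powersetCard, Finset.card_range]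
  have hR : ∀ b ∈ 𝔅, (((range v).powersetCard 2).filter (fun T => T ⊆ b)).card = 3 := by
    intro b hb
    have hb' := hD.1 b hb
    have he : ((range v).powersetCard 2).filter (fun T => T ⊆ b) = b.powersetCard 2 := by
      ext T
      simp only [mem_filter, Finset.mem_powersetCard]
      constructor
      · rintro ⟨⟨_, h2⟩, h3⟩; exact ⟨h3, h2⟩
      · rintro ⟨h1, h2⟩; exact ⟨⟨h1.trans hb'.1, h2⟩, h1⟩
    rw [he, Finset.card_powersetCard, hb'.2]
    decide
  rw [hL, Finset.sum_congr rfl hR, Finset.sum_const, smul_eq_mul] at hswap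
  have h2 : 2 * v.choose 2 = v * (v - 1) := by
    have h := Nat.descFactorial_eq_factorial_mul_choose v 2
    rw [Nat.descFactorial_succ, Nat.descFactorial_succ, Nat.descFactorial_zero] at h
    simp [Nat.factorial] at h
    rw [← h]; ring
  omega

lemma two_r (v : ℕ) (𝔅 : Finset (Finset ℕ)) (hD : IsDesign v 2 3 1 𝔅)
    (q : ℕ) (hq : q ∈ range v) :
    2 * (𝔅.filter (fun b => q ∈ b)).card = v - 1 := by
  set A := ((range v).powersetCard 2).filter (fun T => q ∈ T) with hA
  have hswap : ∑ T ∈ A, (𝔅.filter (fun b => T ⊆ b)).card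
      = ∑ b ∈ 𝔅, (A.filter (fun T => T ⊆ b)).card := by
    simp only [Finset.card_filter]
    rw [Finset.sum_comm]
  have hL : ∑ T ∈ A, (𝔅.filter (fun b => T ⊆ b)).card = v - 1 := by
    rw [Finset.sum_congr rfl (fun T hT => ?_), Finset.sum_const, smul_eq_mul, mul_one]
    · rw [hA, pairs_through _ q hq, Finset.card_range]
    · rw [hA] at hT
      simp only [mem_filter, Finset.mem_powersetCard] at hT
      exact hD.2 T hT.1.1 hT.1.2
  have hR : ∀ b ∈ 𝔅, (A.filter (fun T => T ⊆ b)).card = if q ∈ b then 2 else 0 := by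
    intro b hb
    have hb' := hD.1 b hb
    have he : A.filter (fun T => T ⊆ b) = (b.powersetCard 2).filter (fun T => q ∈ T) := by
      rw [hA, Finset.filter_filter]
      ext T
      simp only [mem_filter, Finset.mem_powersetCard]
      constructor
      · rintro ⟨⟨_, h2⟩, h3, h4⟩; exact ⟨⟨h4, h2⟩, h3⟩
      · rintro ⟨⟨h1, h2⟩, h3⟩; exact ⟨⟨h1.trans hb'.1, h2⟩, h3, h1⟩
    rw [he]
    by_cases hqb : q ∈ b
    · rw [if_pos hqb, pairs_through b q hqb, hb'.2]
    · rw [if_neg hqb]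
      rw [Finset.card_eq_zero, Finset.filter_eq_empty_iff]
      intro T hT
      simp only [Finset.mem_powersetCard] at hT
      exact fun hqT => hqb (hT.1 hqT)
  rw [hL, Finset.sum_congr rfl hR, ← Finset.sum_filter, Finset.sum_const,
    smul_eq_mul] at hswap
  omega

lemma indeg_eq (v : ℕ) (𝔅 : Finset (Finset ℕ)) (hD : IsDesign v 2 3 1 𝔅)
    (b : Finset ℕ) (hb : b ∈ 𝔅) :
    ((((range v) ×ˢ (range v)).filter (fun z => z.1 < z.2)).filter
        (fun z => z.1 ∈ b ∧ z.2 ∉ b)).card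
      = (((range v).powersetCard 3).filter (fun P => welterRel v 3 P b)).card := by
  have hbsub := (hD.1 b hb).1
  have hbcard := (hD.1 b hb).2
  apply Finset.card_bij (fun z _ => insert z.2 (b.erase z.1))
  · rintro ⟨q, p⟩ hz
    simp only [mem_filter, Finset.mem_product, Finset.mem_range] at hz
    obtain ⟨⟨⟨hqv, hpv⟩, hqp⟩, hqb, hpb⟩ := hz
    have hpe : p ∉ b.erase q := fun hh => hpb (Finset.mem_of_mem_erase hh)
    have hPsub : insert p (b.erase q) ⊆ range v := by
      apply Finset.insert_subset (Finset.mem_range.mpr hpv)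
      exact (Finset.erase_subset _ _).trans hbsub
    have hPcard : (insert p (b.erase q)).card = 3 := by
      rw [Finset.card_insert_of_notMem hpe, Finset.card_erase_of_mem hqb, hbcard]
    simp only [mem_filter, Finset.mem_powersetCard]
    refine ⟨⟨hPsub, hPcard⟩, ⟨hPsub, hPcard⟩, ⟨hbsub, hbcard⟩, ?_⟩
    refine ⟨p, Finset.mem_insert_self _ _, q, ?_, hqp, ?_⟩
    · simp only [Finset.mem_insert, Finset.mem_erase]
      rintro (rfl | ⟨h1, h2⟩)
      · exact hpb hqb
      · exact h1 rfl
    · rw [Finset.erase_insert hpe, Finset.insert_erase hqb]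
  · rintro ⟨q1, p1⟩ h1 ⟨q2, p2⟩ h2 heq
    simp only [mem_filter, Finset.mem_product, Finset.mem_range] at h1 h2
    obtain ⟨⟨⟨hq1v, hp1v⟩, hqp1⟩, hq1b, hp1b⟩ := h1
    obtain ⟨⟨⟨hq2v, hp2v⟩, hqp2⟩, hq2b, hp2b⟩ := h2
    simp only at heq
    have hpe1 : p1 ∉ b.erase q1 := fun hh => hp1b (Finset.mem_of_mem_erase hh)
    have hpe2 : p2 ∉ b.erase q2 := fun hh => hp2b (Finset.mem_of_mem_erase hh)
    have hp : p2 = p1 := by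
      have : p2 ∈ insert p1 (b.erase q1) := by rw [heq]; exact Finset.mem_insert_self _ _
      rcases Finset.mem_insert.mp this with h | h
      · exact h
      · exact absurd (Finset.mem_of_mem_erase h) hp2b
    subst hp
    have herase : b.erase q1 = b.erase q2 := by
      have := congrArg (fun s => Finset.erase s p2) heq
      simpa [Finset.erase_insert hpe1, Finset.erase_insert hpe2] using this
    have : q1 = q2 := by
      by_contra hne
      have : q1 ∈ b.erase q2 := Finset.mem_erase.mpr ⟨hne, hq1b⟩
      rw [← herase] at this
      exact (Finset.notMem_erase q1 b) this
    simp [this]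
  · intro P hP
    simp only [mem_filter, Finset.mem_powersetCard] at hP
    obtain ⟨⟨hPsub, hPcard⟩, _, _, p, hpP, q, hqP, hqp, hbP⟩ := hP
    have hpv : p < v := Finset.mem_range.mp (hPsub hpP)
    have hqb : q ∈ b := by rw [hbP]; exact Finset.mem_insert_self _ _
    have hpb : p ∉ b := by
      rw [hbP]
      simp only [Finset.mem_insert, Finset.mem_erase]
      rintro (rfl | ⟨h1, h2⟩)
      · exact absurd rfl (Nat.ne_of_lt hqp)
      · exact h1 rfl
    refine ⟨(q, p), ?_, ?_⟩
    · simp only [mem_filter, Finset.mem_product, Finset.mem_range]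
      exact ⟨⟨⟨hqp.trans hpv, hpv⟩, hqp⟩, hqb, hpb⟩
    · have hqe : q ∉ P.erase p := fun hh => hqP (Finset.mem_of_mem_erase hh)
      simp only
      rw [hbP, Finset.erase_insert hqe, Finset.insert_erase hpP]

lemma pair_block_count (v : ℕ) (𝔅 : Finset (Finset ℕ)) (hD : IsDesign v 2 3 1 𝔅)
    (q p : ℕ) (hq : q < p) (hp : p < v) :
    2 * (𝔅.filter (fun b => q ∈ b ∧ p ∉ b)).card = v - 3 := by
  have h1 : (𝔅.filter (fun b => q ∈ b ∧ p ∈ b)).card = 1 := by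
    have he : 𝔅.filter (fun b => q ∈ b ∧ p ∈ b) = 𝔅.filter (fun b => insert q {p} ⊆ b) := by
      apply Finset.filter_congr
      intro b _
      simp [Finset.insert_subset_iff]
    rw [he]
    apply hD.2
    · intro x hx
      simp only [Finset.mem_insert, Finset.mem_singleton] at hx
      rcases hx with rfl | rfl
      · exact Finset.mem_range.mpr (hq.trans hp)
      · exact Finset.mem_range.mpr hp
    · rw [Finset.card_insert_of_notMem (by simp [Nat.ne_of_lt hq]), Finset.card_singleton]
  have h2 : (𝔅.filter (fun b => q ∈ b ∧ p ∈ b)).card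
      + (𝔅.filter (fun b => q ∈ b ∧ p ∉ b)).card = (𝔅.filter (fun b => q ∈ b)).card := by
    rw [← Finset.filter_filter, ← Finset.filter_filter]
    exact Finset.card_filter_add_card_filter_not (fun b => p ∈ b)
  have h3 := two_r v 𝔅 hD q (Finset.mem_range.mpr (hq.trans hp))
  omega

lemma A_card (v : ℕ) :
    2 * (((range v) ×ˢ (range v)).filter (fun z => z.1 < z.2)).card = v * (v - 1) := by
  have h1 : (((range v) ×ˢ (range v)).filter (fun z => z.1 < z.2)).card
      = ∑ y ∈ range v, y := by
    rw [Finset.card_filter, Finset.sum_product, Finset.sum_comm]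
    apply Finset.sum_congr rfl
    intro y hy
    rw [← Finset.card_filter]
    have : (range v).filter (fun x => x < y) = range y := by
      ext x
      have hy' := Finset.mem_range.mp hy
      simp only [mem_filter, Finset.mem_range]
      omega
    rw [this, Finset.card_range]
  rw [h1, mul_comm]
  exact Finset.sum_range_id_mul_two v

lemma four_E (v : ℕ) (𝔅 : Finset (Finset ℕ)) (hv : 3 ≤ v) (hD : IsDesign v 2 3 1 𝔅) :
    4 * ∑ P ∈ (range v).powersetCard 3, deg v 𝔅 P = v * (v - 1) * (v - 3) := by
  have hswap : ∑ P ∈ (range v).powersetCard 3, (𝔅.filter (fun b => welterRel v 3 P b)).card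
      = ∑ b ∈ 𝔅, (((range v).powersetCard 3).filter (fun P => welterRel v 3 P b)).card := by
    simp only [Finset.card_filter]
    rw [Finset.sum_comm]
  have hswap2 : ∑ b ∈ 𝔅, ((((range v) ×ˢ (range v)).filter (fun z => z.1 < z.2)).filter
        (fun z => z.1 ∈ b ∧ z.2 ∉ b)).card
      = ∑ z ∈ ((range v) ×ˢ (range v)).filter (fun z => z.1 < z.2),
          (𝔅.filter (fun b => z.1 ∈ b ∧ z.2 ∉ b)).card := by
    simp only [Finset.card_filter]
    rw [Finset.sum_comm]
  have key : 2 * ∑ P ∈ (range v).powersetCard 3, deg v 𝔅 P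
      = (((range v) ×ˢ (range v)).filter (fun z => z.1 < z.2)).card * (v - 3) := by
    simp only [deg]
    rw [hswap, ← Finset.sum_congr rfl (fun b hb => indeg_eq v 𝔅 hD b hb), hswap2,
      Finset.mul_sum]
    rw [Finset.sum_congr rfl (fun z hz => ?_), Finset.sum_const, smul_eq_mul]
    have hz' := Finset.mem_filter.mp hz
    have hmem := Finset.mem_product.mp hz'.1
    exact pair_block_count v 𝔅 hD z.1 z.2 hz'.2 (Finset.mem_range.mp hmem.2)
  have hA := A_card v
  calc 4 * ∑ P ∈ (range v).powersetCard 3, deg v 𝔅 P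
      = 2 * (2 * ∑ P ∈ (range v).powersetCard 3, deg v 𝔅 P) := by ring
    _ = 2 * ((((range v) ×ˢ (range v)).filter (fun z => z.1 < z.2)).card * (v - 3)) := by
        rw [key]
    _ = (2 * (((range v) ×ˢ (range v)).filter (fun z => z.1 < z.2)).card) * (v - 3) := by
        ring
    _ = v * (v - 1) * (v - 3) := by rw [hA]

lemma mem_vertex_iff (v k : ℕ) (P : Finset ℕ) :
    P ∈ welterVertex v k ↔ P ∈ (Finset.range v).powersetCard k := by
  simp [welterVertex, Finset.mem_powersetCard]

-- unique block through a 2-set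
lemma block_unique (v : ℕ) (𝔅 : Finset (Finset ℕ)) (hD : IsDesign v 2 3 1 𝔅)
    (T : Finset ℕ) (hT : T ⊆ range v) (hT2 : T.card = 2)
    (b1 b2 : Finset ℕ) (hb1 : b1 ∈ 𝔅) (hb2 : b2 ∈ 𝔅)
    (hs1 : T ⊆ b1) (hs2 : T ⊆ b2) : b1 = b2 := by
  have h := hD.2 T hT hT2
  have := Finset.card_le_one.mp (le_of_eq h)
  exact this b1 (Finset.mem_filter.mpr ⟨hb1, hs1⟩) b2 (Finset.mem_filter.mpr ⟨hb2, hs2⟩)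

-- intersection of P and a welter-successor block
lemma inter_eq (P b : Finset ℕ) (p q : ℕ) (hp : p ∈ P) (hq : q ∉ P)
    (hb : b = insert q (P.erase p)) : P ∩ b = P.erase p := by
  ext x
  simp only [Finset.mem_inter, hb, Finset.mem_insert, Finset.mem_erase]
  constructor
  · rintro ⟨hxP, rfl | hx⟩
    · exact absurd hxP hq
    · exact hx
  · rintro ⟨hxp, hxP⟩
    exact ⟨hxP, Or.inr ⟨hxp, hxP⟩⟩

lemma deg_le_three (v : ℕ) (𝔅 : Finset (Finset ℕ)) (hD : IsDesign v 2 3 1 𝔅)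
    (P : Finset ℕ) (hP : P ∈ (range v).powersetCard 3) : deg v 𝔅 P ≤ 3 := by
  obtain ⟨hPsub, hPcard⟩ := Finset.mem_powersetCard.mp hP
  have hinj : ∀ b ∈ 𝔅.filter (fun b => welterRel v 3 P b), P ∩ b ∈ P.powersetCard 2 := by
    intro b hb
    obtain ⟨hb𝔅, _, _, p, hp, q, hq, hqp, hbP⟩ := Finset.mem_filter.mp hb
    rw [Finset.mem_powersetCard, inter_eq P b p q hp hq hbP]
    exact ⟨Finset.erase_subset _ _, by rw [Finset.card_erase_of_mem hp, hPcard]⟩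
  have hcard := Finset.card_le_card_of_injOn (fun b => P ∩ b) hinj ?_
  · rw [Finset.card_powersetCard, hPcard] at hcard
    exact hcard.trans (by norm_num)
  · intro b1 hb1 b2 hb2 heq
    simp only [Finset.mem_coe, Finset.mem_filter] at hb1 hb2
    obtain ⟨hb1𝔅, _, _, p1, hp1, q1, hq1, hqp1, hbP1⟩ := hb1
    obtain ⟨hb2𝔅, _, _, p2, hp2, q2, hq2, hqp2, hbP2⟩ := hb2
    have hi1 := inter_eq P b1 p1 q1 hp1 hq1 hbP1
    have hc1 : (P ∩ b1).card = 2 := by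
      rw [hi1, Finset.card_erase_of_mem hp1, hPcard]
    apply block_unique v 𝔅 hD (P ∩ b1) ((Finset.inter_subset_left).trans hPsub) hc1
      b1 b2 hb1𝔅 hb2𝔅 Finset.inter_subset_right
    have heq' : P ∩ b1 = P ∩ b2 := heq
    rw [heq']
    exact Finset.inter_subset_right

lemma deg_block (v : ℕ) (𝔅 : Finset (Finset ℕ)) (hD : IsDesign v 2 3 1 𝔅)
    (b : Finset ℕ) (hb : b ∈ 𝔅) : deg v 𝔅 b = 0 := by
  rw [deg, Finset.card_eq_zero, Finset.filter_eq_empty_iff]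
  rintro c hc ⟨⟨hbsub, hbcard⟩, _, p, hp, q, hq, hqp, hcb⟩
  have hTsub : b.erase p ⊆ range v := (Finset.erase_subset _ _).trans hbsub
  have hT2 : (b.erase p).card = 2 := by rw [Finset.card_erase_of_mem hp, hbcard]
  have heq : b = c := by
    apply block_unique v 𝔅 hD (b.erase p) hTsub hT2 b c hb hc (Finset.erase_subset _ _)
    rw [hcb]
    exact (Finset.subset_insert _ _)
  apply hq
  rw [heq, hcb]
  exact Finset.mem_insert_self _ _

lemma ICount_sum (v : ℕ) (𝔅 : Finset (Finset ℕ)) :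
    ∑ z ∈ 𝔅.offDiag, ICount v z.1 z.2
      = ∑ P ∈ (range v).powersetCard 3, (deg v 𝔅 P * deg v 𝔅 P - deg v 𝔅 P) := by
  have step1 : ∀ z ∈ 𝔅.offDiag, ICount v z.1 z.2
      = (((range v).powersetCard 3).filter
          (fun P => welterRel v 3 P z.1 ∧ welterRel v 3 P z.2)).card := by
    intro z _
    rw [ICount]
    have : {P | welterRel v 3 P z.1 ∧ welterRel v 3 P z.2}
        = ↑(((range v).powersetCard 3).filter
            (fun P => welterRel v 3 P z.1 ∧ welterRel v 3 P z.2)) := by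
      ext P
      simp only [Set.mem_setOf_eq, Finset.coe_filter, Finset.mem_coe, Finset.mem_filter]
      constructor
      · intro hrel
        exact ⟨(mem_vertex_iff v 3 P).mp hrel.1.1, hrel⟩
      · exact fun h => h.2
    rw [this, Set.ncard_coe_finset]
  rw [Finset.sum_congr rfl step1]
  have hswap : ∑ z ∈ 𝔅.offDiag, (((range v).powersetCard 3).filter
        (fun P => welterRel v 3 P z.1 ∧ welterRel v 3 P z.2)).card
      = ∑ P ∈ (range v).powersetCard 3,
          (𝔅.offDiag.filter (fun z => welterRel v 3 P z.1 ∧ welterRel v 3 P z.2)).card := by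
    simp only [Finset.card_filter]
    rw [Finset.sum_comm]
  rw [hswap]
  apply Finset.sum_congr rfl
  intro P _
  have : 𝔅.offDiag.filter (fun z => welterRel v 3 P z.1 ∧ welterRel v 3 P z.2)
      = (𝔅.filter (fun b => welterRel v 3 P b)).offDiag := by
    ext z
    simp only [Finset.mem_filter, Finset.mem_offDiag]
    tauto
  rw [this, Finset.offDiag_card, deg]

lemma aCount_eq (v : ℕ) (𝔅 : Finset (Finset ℕ)) (i : ℕ) :
    aCount v 3 𝔅 i
      = ((((range v).powersetCard 3) \ 𝔅).filter (fun P => deg v 𝔅 P = i)).card := by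
  rw [aCount]
  have hset : {P | P ∈ welterVertex v 3 ∧ P ∉ 𝔅 ∧
        Set.ncard {b | b ∈ 𝔅 ∧ welterRel v 3 P b} = i}
      = ↑((((range v).powersetCard 3) \ 𝔅).filter (fun P => deg v 𝔅 P = i)) := by
    ext P
    have hdeg : Set.ncard {b | b ∈ 𝔅 ∧ welterRel v 3 P b} = deg v 𝔅 P := by
      have : {b | b ∈ 𝔅 ∧ welterRel v 3 P b} = ↑(𝔅.filter (fun b => welterRel v 3 P b)) := by
        ext b; simp
      rw [this, Set.ncard_coe_finset, deg]
    simp only [Set.mem_setOf_eq, Finset.coe_filter, Finset.mem_sdiff, hdeg,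
      mem_vertex_iff]
    tauto
  rw [hset, Set.ncard_coe_finset]


lemma six_choose_three' (n : ℕ) : 6 * n.choose 3 = n * (n - 1) * (n - 2) := by
  have h := Nat.descFactorial_eq_factorial_mul_choose n 3
  rw [Nat.descFactorial_succ, Nat.descFactorial_succ, Nat.descFactorial_succ,
    Nat.descFactorial_zero] at h
  simp [Nat.factorial] at h
  rw [← h]; ring

lemma pointwise_id (d : ℕ) (hd : d ≤ 3) :
    12 * ((if d = 0 then (1:ℤ) else 0) + (if d = 3 then (1:ℤ) else 0))
      = 6 * ((d:ℤ) * (d:ℤ) - (d:ℤ)) + 12 - 12 * (d:ℤ) := by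
  interval_cases d <;> norm_num

/-- For a Steiner triple system `S(2, 3, v)`:
`a₀(D) + a₃(D) = Σ_{{B,C} ∈ C(𝔅,2)} I(B, C) - v(v-1)(v-3)/12`. Stated over `ℤ`,
multiplied through by 12, with the sum over unordered pairs written as half the sum
over ordered pairs of distinct blocks (so `12 · Σ_unordered = 6 · Σ_offDiag`). -/
theorem stmt_15 (v : ℕ) (𝔅 : Finset (Finset ℕ)) (hv : 3 ≤ v)
    (h : IsSteiner v 2 3 𝔅) :
    12 * ((aCount v 3 𝔅 0 : ℤ) + (aCount v 3 𝔅 3 : ℤ))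
        + (v : ℤ) * ((v : ℤ) - 1) * ((v : ℤ) - 3)
      = 6 * ∑ p ∈ 𝔅.offDiag, (ICount v p.1 p.2 : ℤ) := by

  classical
  have hD : IsDesign v 2 3 1 𝔅 := h
  set K := (range v).powersetCard 3 with hK
  have hsub : 𝔅 ⊆ K := fun b hb => Finset.mem_powersetCard.mpr (hD.1 b hb)
  set NB := K \ 𝔅 with hNB
  -- ℕ counting facts
  have hKcard : 6 * K.card = v * (v - 1) * (v - 2) := by
    rw [hK, Finset.card_powersetCard, Finset.card_range]; exact six_choose_three' v
  have hBcard : 6 * 𝔅.card = v * (v - 1) := six_blocks v 𝔅 hD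
  have hEK : 4 * ∑ P ∈ K, deg v 𝔅 P = v * (v - 1) * (v - 3) := four_E v 𝔅 hv hD
  have hSK : ∑ z ∈ 𝔅.offDiag, ICount v z.1 z.2
      = ∑ P ∈ K, (deg v 𝔅 P * deg v 𝔅 P - deg v 𝔅 P) := ICount_sum v 𝔅
  -- restriction of sums to non-blocks
  have hrestrict : ∀ f : Finset ℕ → ℕ, (∀ b ∈ 𝔅, f b = 0) →
      ∑ P ∈ K, f P = ∑ P ∈ NB, f P := by
    intro f hf
    rw [← Finset.sum_sdiff hsub, Finset.sum_congr rfl hf, Finset.sum_const_zero, add_zero]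
  have hENB : ∑ P ∈ K, deg v 𝔅 P = ∑ P ∈ NB, deg v 𝔅 P :=
    hrestrict _ (fun b hb => deg_block v 𝔅 hD b hb)
  have hSNB : ∑ P ∈ K, (deg v 𝔅 P * deg v 𝔅 P - deg v 𝔅 P)
      = ∑ P ∈ NB, (deg v 𝔅 P * deg v 𝔅 P - deg v 𝔅 P) := by
    apply hrestrict
    intro b hb
    rw [deg_block v 𝔅 hD b hb]
  rw [hENB] at hEK
  rw [hSNB] at hSK
  -- cast to ℤ
  have hd3 : ∀ P ∈ NB, deg v 𝔅 P ≤ 3 := fun P hP =>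
    deg_le_three v 𝔅 hD P (Finset.mem_sdiff.mp hP).1
  have hcast : ∀ P ∈ NB, ((deg v 𝔅 P * deg v 𝔅 P - deg v 𝔅 P : ℕ) : ℤ)
      = (deg v 𝔅 P : ℤ) * (deg v 𝔅 P : ℤ) - (deg v 𝔅 P : ℤ) := by
    intro P hP
    have hle : deg v 𝔅 P ≤ deg v 𝔅 P * deg v 𝔅 P := by
      rcases Nat.eq_zero_or_pos (deg v 𝔅 P) with h0 | h0
      · simp [h0]
      · exact Nat.le_mul_of_pos_left _ h0
    rw [Nat.cast_sub hle, Nat.cast_mul]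
  have hSz : ∑ p ∈ 𝔅.offDiag, (ICount v p.1 p.2 : ℤ)
      = ∑ P ∈ NB, ((deg v 𝔅 P : ℤ) * (deg v 𝔅 P : ℤ) - (deg v 𝔅 P : ℤ)) := by
    rw [← Nat.cast_sum, hSK, Nat.cast_sum, Finset.sum_congr rfl hcast]
  have hEz : 4 * ∑ P ∈ NB, (deg v 𝔅 P : ℤ) = (v : ℤ) * ((v : ℤ) - 1) * ((v : ℤ) - 3) := by
    have := hEK
    zify [show 1 ≤ v by omega, show 3 ≤ v by omega] at this
    exact this
  have hNz : 6 * ((NB.card : ℤ)) = (v : ℤ) * ((v : ℤ) - 1) * ((v : ℤ) - 3) := by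
    have hle := Finset.card_le_card hsub
    have h1 : (NB.card : ℤ) = (K.card : ℤ) - (𝔅.card : ℤ) := by
      rw [hNB, Finset.card_sdiff_of_subset hsub]
      omega
    have h2 : 6 * (K.card : ℤ) = (v : ℤ) * ((v : ℤ) - 1) * ((v : ℤ) - 2) := by
      have := hKcard
      zify [show 1 ≤ v by omega, show 2 ≤ v by omega] at this
      linarith
    have h3 : 6 * (𝔅.card : ℤ) = (v : ℤ) * ((v : ℤ) - 1) := by
      have := hBcard
      zify [show 1 ≤ v by omega] at this
      linarith
    rw [h1]
    ring_nf
    ring_nf at h2 h3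
    linarith
  -- the aCount sums
  have haC : ∀ i : ℕ, (aCount v 3 𝔅 i : ℤ)
      = ∑ P ∈ NB, (if deg v 𝔅 P = i then (1:ℤ) else 0) := by
    intro i
    rw [aCount_eq v 𝔅 i, Finset.card_filter]
    rw [← hK, ← hNB]
    push_cast
    rfl
  have hmain : 12 * ((aCount v 3 𝔅 0 : ℤ) + (aCount v 3 𝔅 3 : ℤ))
      = ∑ P ∈ NB, (6 * ((deg v 𝔅 P : ℤ) * (deg v 𝔅 P : ℤ) - (deg v 𝔅 P : ℤ))
          + 12 - 12 * (deg v 𝔅 P : ℤ)) := by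
    rw [haC 0, haC 3, ← Finset.sum_add_distrib, Finset.mul_sum]
    apply Finset.sum_congr rfl
    intro P hP
    exact pointwise_id (deg v 𝔅 P) (hd3 P hP)
  have hsplit : ∑ P ∈ NB, (6 * ((deg v 𝔅 P : ℤ) * (deg v 𝔅 P : ℤ) - (deg v 𝔅 P : ℤ))
          + 12 - 12 * (deg v 𝔅 P : ℤ))
      = 6 * (∑ P ∈ NB, ((deg v 𝔅 P : ℤ) * (deg v 𝔅 P : ℤ) - (deg v 𝔅 P : ℤ)))
        + 12 * (NB.card : ℤ) - 12 * ∑ P ∈ NB, (deg v 𝔅 P : ℤ) := by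
    rw [Finset.sum_sub_distrib, Finset.sum_add_distrib, ← Finset.mul_sum, ← Finset.mul_sum,
      Finset.sum_const]
    push_cast
    ring
  rw [hSz, hmain, hsplit]
  linarith [hEz, hNz]
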